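/- Let L be a first-order language with an n-ary relation symbol interpreted on a simple pragmatic structure A = (D, (R_i), P) with empty set of primary sentences P = ∅, and let R = (R₁, R₂, R₃) be the partial relation of A interpreting that symbol. Then for every tuple d ∈ R₃ (naming its components by constants of L interpreted by the corresponding elements of D), the atomic sentence asserting that d stands in the relation and its negation are both pragmatically true in A; hence pragmatic truth in a simple pragmatic structure does not exclude the pragmatic truth of a sentence's negation. -/
import Mathlib


open FirstOrder Language

universe u

/-- A partial `n`-ary relation on `D`: a triple of pairwise disjoint subsets of `Dⁿ`
whose union is all of `Dⁿ` (known to hold, known not to hold, unknown). -/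
structure PartialRel (D : Type u) (n : ℕ) where
  R1 : Set (Fin n → D)
  R2 : Set (Fin n → D)
  R3 : Set (Fin n → D)
  disj12 : Disjoint R1 R2
  disj13 : Disjoint R1 R3
  disj23 : Disjoint R2 R3
  union_eq : R1 ∪ R2 ∪ R3 = Set.univ

/-- A simple pragmatic structure for a first-order language `L` on domain `D`:
a family of partial relations interpreting the relation symbols, an interpretation
of the function symbols, and a set `P` of primary sentences. -/
structure SimplePragmatic (L : Language) (D : Type u) where
  rel : ∀ ⦃n : ℕ⦄, L.Relations n → PartialRel D n
  fn : ∀ ⦃n : ℕ⦄, L.Functions n → (Fin n → D) → D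
  P : Set L.Sentence

/-- A total structure `B` on `D` is `A`-normal if it interprets the function symbols as `A`
does, its total relations expand the partial relations of `A` (containing `R1` and disjoint
from `R2`), and every primary sentence of `A` is true in `B`. -/
def ANormal {L : Language} {D : Type u} (A : SimplePragmatic L D) (B : L.Structure D) : Prop :=
  (∀ (n : ℕ) (f : L.Functions n) (x : Fin n → D), B.funMap f x = A.fn f x) ∧
  (∀ (n : ℕ) (r : L.Relations n), (A.rel r).R1 ⊆ {x | B.RelMap r x}) ∧
  (∀ (n : ℕ) (r : L.Relations n), (A.rel r).R2 ∩ {x | B.RelMap r x} = ∅) ∧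
  (∀ φ ∈ A.P, @Sentence.Realize L D B φ)

/-- A sentence is pragmatically true in `A` iff it is true in at least one `A`-normal
structure. -/
def PragTrue {L : Language} {D : Type u} (A : SimplePragmatic L D) (φ : L.Sentence) : Prop :=
  ∃ B : L.Structure D, ANormal A B ∧ @Sentence.Realize L D B φ

/-- A sentence is pragmatically false in `A` iff it is true in no `A`-normal structure. -/
def PragFalse {L : Language} {D : Type u} (A : SimplePragmatic L D) (φ : L.Sentence) : Prop :=
  ¬ PragTrue A φ

/-- if `P = ∅` and the tuple `d` (named by constants `c` of `L`) lies in the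
unknown part `R3` of the partial relation interpreting `r`, then both the atomic sentence
`r(c)` and its negation are pragmatically true in `A`. -/
theorem stmt3 {L : Language} {D : Type u} [Nonempty D]
    (A : SimplePragmatic L D)
    (hP : A.P = ∅)
    {n : ℕ} (r : L.Relations n)
    (c : Fin n → L.Constants) (d : Fin n → D)
    (hc : ∀ i, A.fn (c i) (fun x => x.elim0) = d i)
    (hd : d ∈ (A.rel r).R3) :
    PragTrue A (r.formula fun i => (c i).term) ∧
    PragTrue A (∼(r.formula fun i => (c i).term)) := by

  classical
  let B1 : L.Structure D :=
    ⟨fun {_} f x => A.fn f x, fun {_} s x => x ∈ (A.rel s).R1 ∪ (A.rel s).R3⟩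
  let B2 : L.Structure D :=
    ⟨fun {_} f x => A.fn f x, fun {_} s x => x ∈ (A.rel s).R1⟩
  have key : ∀ (B : L.Structure D),
      (∀ i, B.funMap (c i) (fun x => x.elim0) = d i) →
      ((@Sentence.Realize L D B (r.formula fun i => (c i).term)) ↔ B.RelMap r d) := by
    intro B hcB
    letI := B
    have hterm : ∀ (α : Type) (v : α → D) (i : Fin n), Term.realize v ((c i).term) = d i := by
      intro α v i
      rw [← hcB i]
      simp only [Constants.term, Term.realize]
      congr
      funext x
      exact x.elim0
    simp only [Sentence.Realize, Relations.formula, Formula.Realize,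
      BoundedFormula.realize_rel, Term.realize_relabel, hterm]
  have hP' : ∀ φ ∈ A.P, True := fun _ _ => trivial
  constructor
  · refine ⟨B1, ⟨fun _ _ _ => rfl, fun m s => Set.subset_union_left, fun m s => ?_,
      fun φ hφ => absurd (hP ▸ hφ) (Set.notMem_empty φ)⟩, ?_⟩
    · ext x
      simp only [Set.mem_inter_iff, Set.mem_setOf_eq, Set.mem_empty_iff_false, iff_false]
      rintro ⟨h2, h1 | h3⟩
      · exact (A.rel s).disj12.ne_of_mem h1 h2 rfl
      · exact (A.rel s).disj23.ne_of_mem h2 h3 rfl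
    · exact (key B1 (fun i => hc i)).mpr (Or.inr hd)
  · refine ⟨B2, ⟨fun _ _ _ => rfl, fun m s => le_refl _, fun m s => ?_,
      fun φ hφ => absurd (hP ▸ hφ) (Set.notMem_empty φ)⟩, ?_⟩
    · ext x
      simp only [Set.mem_inter_iff, Set.mem_setOf_eq, Set.mem_empty_iff_false, iff_false]
      rintro ⟨h2, h1⟩
      exact (A.rel s).disj12.ne_of_mem h1 h2 rfl
    · intro h
      exact (A.rel r).disj13.ne_of_mem ((key B2 (fun i => hc i)).mp h) hd rfl
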